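/- In a medium, if m is a concise message for a state P producing Q (so P ≠ Q), then the set difference of the token content of Q minus the token content of P equals the content of m, and the symmetric difference of the contents of Q and P equals the disjoint union of C(m) and C(m̃), where m̃ is the reverse message of m. -/

import Mathlib

variable {S : Type*}

/-- Result of applying message `m` (a list of tokens) to state `P`. -/
def mApply (m : List (S → S)) (P : S) : S := m.foldl (fun s τ => τ s) P

/-- `τ'` is a reverse of `τ`. -/
def IsReverse (τ τ' : S → S) : Prop := ∀ P Q : S, P ≠ Q → (τ P = Q ↔ τ' Q = P)

/-- `(S, T)` is a token system. -/
def IsTokenSystem (T : Set (S → S)) : Prop :=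
  Nontrivial S ∧ T.Nonempty ∧ ∀ τ ∈ T, τ ≠ id

/-- `m` is a message of the token system with token set `T`. -/
def IsMsg (T : Set (S → S)) (m : List (S → S)) : Prop := ∀ τ ∈ m, τ ∈ T

/-- `m` is stepwise effective for `P`. -/
def StepwiseEff : List (S → S) → S → Prop
  | [], _ => True
  | τ :: rest, P => τ P ≠ P ∧ StepwiseEff rest (τ P)

/-- `m` is consistent: it contains no token together with a reverse of it. -/
def Consistent (m : List (S → S)) : Prop :=
  ∀ τ ∈ m, ∀ τ' ∈ m, ¬ IsReverse τ τ'

/-- `m` is concise for `P`. -/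
def Concise (T : Set (S → S)) (m : List (S → S)) (P : S) : Prop :=
  IsMsg T m ∧ Consistent m ∧ StepwiseEff m P ∧ m.Nodup

/-- `m` is a return message for `P`. -/
def IsReturn (m : List (S → S)) (P : S) : Prop :=
  StepwiseEff m P ∧ mApply m P = P

/-- `m` is vacuous: its indices partition into pairs of mutually reverse tokens. -/
def Vacuous (m : List (S → S)) : Prop :=
  ∃ σ : Equiv.Perm (Fin m.length),
    (∀ i, σ i ≠ i) ∧ (∀ i, σ (σ i) = i) ∧
    ∀ i, IsReverse (m.get i) (m.get (σ i))

/-- `(S, T)` is a medium: token system satisfying [Ma] and [Mb]. -/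
def IsMedium (T : Set (S → S)) : Prop :=
  IsTokenSystem T ∧
  (∀ P Q : S, P ≠ Q → ∃ m, Concise T m P ∧ mApply m P = Q) ∧
  (∀ (m : List (S → S)) (P : S), IsMsg T m → IsReturn m P → Vacuous m)

/-- Content of a message: its set of tokens. -/
def msgContent (m : List (S → S)) : Set (S → S) := {τ | τ ∈ m}

/-- Token content of a state `P`. -/
def SContent (T : Set (S → S)) (P : S) : Set (S → S) :=
  {τ | ∃ (V : S) (m : List (S → S)), Concise T m V ∧ mApply m V = P ∧ τ ∈ m}

/-- `mr` is the reverse message `τ̃ₙ…τ̃₁` of `m = τ₁…τₙ`. -/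
def IsReverseOfMsg (m mr : List (S → S)) : Prop :=
  List.Forall₂ (fun τ τ' => IsReverse τ τ' ∧ IsReverse τ' τ) m mr.reverse


section Aux
open Classical
variable {T : Set (S → S)}

lemma isReverse_symm {τ τ' : S → S} (h : IsReverse τ τ') : IsReverse τ' τ := by
  intro P Q hPQ
  have := h Q P (Ne.symm hPQ)
  tauto

lemma reverse_unique {τ a b : S → S} (ha : IsReverse τ a) (hb : IsReverse τ b) : a = b := by
  funext Q
  by_cases h : ∃ P, P ≠ Q ∧ τ P = Q
  · obtain ⟨P, hPQ, hτ⟩ := h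
    rw [(ha P Q hPQ).1 hτ, (hb P Q hPQ).1 hτ]
  · push_neg at h
    have hQa : a Q = Q := by
      by_contra hne
      exact h (a Q) (hne) ((ha (a Q) Q (hne)).2 rfl)
    have hQb : b Q = Q := by
      by_contra hne
      exact h (b Q) (hne) ((hb (b Q) Q (hne)).2 rfl)
    rw [hQa, hQb]

lemma reverse_unique' {τ a b : S → S} (ha : IsReverse a τ) (hb : IsReverse b τ) : a = b :=
  reverse_unique (isReverse_symm ha) (isReverse_symm hb)

lemma mApply_append (a b : List (S → S)) (P : S) :
    mApply (a ++ b) P = mApply b (mApply a P) := by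
  simp [mApply, List.foldl_append]

lemma stepwiseEff_append {a b : List (S → S)} {P : S} :
    StepwiseEff (a ++ b) P ↔ StepwiseEff a P ∧ StepwiseEff b (mApply a P) := by
  induction a generalizing P with
  | nil => simp [StepwiseEff, mApply]
  | cons τ rest ih =>
    simp only [List.cons_append, StepwiseEff, List.append_eq, ih, mApply, List.foldl_cons]
    tauto

lemma effective_mem {m : List (S → S)} {P : S} (h : StepwiseEff m P) {τ : S → S}
    (hτ : τ ∈ m) : ∃ X, τ X ≠ X := by
  induction m generalizing P with
  | nil => simp at hτ
  | cons a rest ih =>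
    rcases List.mem_cons.1 hτ with rfl | hmem
    · exact ⟨P, h.1⟩
    · exact ih h.2 hmem

lemma concise_nil (P : S) : Concise T [] P :=
  ⟨fun τ h => absurd h List.not_mem_nil, fun τ h => absurd h List.not_mem_nil,
    trivial, List.nodup_nil⟩

/-- From vacuousness: any member has a reverse member. -/
lemma vacuous_exists_reverse {u : List (S → S)} (hu : Vacuous u) {τ : S → S} (hτ : τ ∈ u) :
    ∃ ρ ∈ u, IsReverse τ ρ := by
  obtain ⟨σ, -, -, hσ⟩ := hu
  obtain ⟨i, rfl⟩ := List.mem_iff_get.1 hτ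
  exact ⟨u.get (σ i), u.get_mem _, hσ i⟩

/-- Every token effective somewhere has a reverse in `T`. -/
lemma exists_reverse_in_T (hM : IsMedium T) {τ : S → S} (hT : τ ∈ T) {X : S}
    (hX : τ X ≠ X) : ∃ τ' ∈ T, IsReverse τ τ' := by
  obtain ⟨-, hMa, hMb⟩ := hM
  obtain ⟨w, hw, hwA⟩ := hMa (τ X) X hX
  have hmsg : IsMsg T (τ :: w) := by
    intro ρ hρ
    rcases List.mem_cons.1 hρ with rfl | h
    · exact hT
    · exact hw.1 ρ h
  have hret : IsReturn (τ :: w) X := by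
    refine ⟨⟨hX, hw.2.2.1⟩, ?_⟩
    show mApply ([τ] ++ w) X = X
    rw [mApply_append]
    simpa [mApply] using hwA
  have hvac := hMb _ _ hmsg hret
  obtain ⟨ρ, hρmem, hρ⟩ := vacuous_exists_reverse hvac List.mem_cons_self
  exact ⟨ρ, hmsg ρ hρmem, hρ⟩

lemma forall₂_mem_right {R : (S → S) → (S → S) → Prop} {l₁ l₂ : List (S → S)}
    (h : List.Forall₂ R l₁ l₂) {b : S → S} (hb : b ∈ l₂) : ∃ a ∈ l₁, R a b := by
  induction h with
  | nil => simp at hb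
  | cons hR _ ih =>
    rcases List.mem_cons.1 hb with rfl | hb'
    · exact ⟨_, List.mem_cons_self, hR⟩
    · obtain ⟨a, ha, hab⟩ := ih hb'
      exact ⟨a, List.mem_cons_of_mem _ ha, hab⟩

lemma forall₂_mem_left {R : (S → S) → (S → S) → Prop} {l₁ l₂ : List (S → S)}
    (h : List.Forall₂ R l₁ l₂) {a : S → S} (ha : a ∈ l₁) : ∃ b ∈ l₂, R a b := by
  induction h with
  | nil => simp at ha
  | cons hR _ ih =>
    rcases List.mem_cons.1 ha with rfl | ha'
    · exact ⟨_, List.mem_cons_self, hR⟩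
    · obtain ⟨b, hb, hab⟩ := ih ha'
      exact ⟨b, List.mem_cons_of_mem _ hb, hab⟩

/-- Membership in a reverse message. -/
lemma revMsg_mem_right {m mr : List (S → S)} (h : IsReverseOfMsg m mr) {ρ : S → S}
    (hρ : ρ ∈ mr) : ∃ τ ∈ m, IsReverse τ ρ ∧ IsReverse ρ τ := by
  exact forall₂_mem_right h (List.mem_reverse.2 hρ)

lemma revMsg_mem_left {m mr : List (S → S)} (h : IsReverseOfMsg m mr) {τ : S → S}
    (hτ : τ ∈ m) : ∃ ρ ∈ mr, IsReverse τ ρ ∧ IsReverse ρ τ := by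
  obtain ⟨ρ, hρ, hR⟩ := forall₂_mem_left h hτ
  exact ⟨ρ, List.mem_reverse.1 hρ, hR⟩

/-- Existence of a reverse message within `T`. -/
lemma exists_reverse_msg (hM : IsMedium T) {m : List (S → S)} {P : S}
    (hmsg : IsMsg T m) (hse : StepwiseEff m P) :
    ∃ mr, IsReverseOfMsg m mr ∧ IsMsg T mr := by
  induction m generalizing P with
  | nil => exact ⟨[], List.Forall₂.nil, fun τ h => absurd h List.not_mem_nil⟩
  | cons τ rest ih =>
    obtain ⟨rr, hrr, hrrT⟩ := ih (fun ρ h => hmsg ρ (List.mem_cons_of_mem _ h)) hse.2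
    obtain ⟨τ', hτ'T, hτ'⟩ := exists_reverse_in_T hM (hmsg τ List.mem_cons_self) hse.1
    refine ⟨rr ++ [τ'], ?_, ?_⟩
    · unfold IsReverseOfMsg
      rw [List.reverse_append]
      exact List.Forall₂.cons ⟨hτ', isReverse_symm hτ'⟩ hrr
    · intro ρ hρ
      rcases List.mem_append.1 hρ with h | h
      · exact hrrT ρ h
      · simp at h; subst h; exact hτ'T

/-- The reverse message undoes `m`: stepwise effectiveness and application. -/
lemma revMsg_stepwise {m mr : List (S → S)} {P : S} (h : IsReverseOfMsg m mr)
    (hse : StepwiseEff m P) :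
    StepwiseEff mr (mApply m P) ∧ mApply mr (mApply m P) = P := by
  induction m generalizing P mr with
  | nil =>
    have : mr.reverse = [] := List.forall₂_nil_left_iff.1 h
    have : mr = [] := by simpa using congrArg List.reverse this
    subst this
    exact ⟨trivial, rfl⟩
  | cons τ rest ih =>
    rcases List.forall₂_cons_left_iff.1 h with ⟨τ', rtail, hτ', htail, heq⟩
    have hmr : mr = rtail.reverse ++ [τ'] := by
      have := congrArg List.reverse heq
      simpa using this
    subst hmr
    have h2 : IsReverseOfMsg rest rtail.reverse := by
      unfold IsReverseOfMsg; rwa [List.reverse_reverse]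
    have happ : mApply (τ :: rest) P = mApply rest (τ P) := by simp [mApply]
    obtain ⟨ih1, ih2⟩ := ih h2 hse.2
    rw [happ]
    have hlast : τ' (τ P) = P := (hτ'.1 P (τ P) (Ne.symm hse.1)).1 rfl
    constructor
    · rw [stepwiseEff_append, ih2]
      exact ⟨ih1, by simp [StepwiseEff, hlast, Ne.symm hse.1], trivial⟩
    · rw [mApply_append, ih2]
      simpa [mApply] using hlast

/-- A reverse message of a concise message is a message of `T` (in a medium). -/
lemma revMsg_isMsg (hM : IsMedium T) {m mr : List (S → S)} {P : S}
    (hmsg : IsMsg T m) (hse : StepwiseEff m P) (h : IsReverseOfMsg m mr) :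
    IsMsg T mr := by
  intro ρ hρ
  obtain ⟨τ, hτm, hR, -⟩ := revMsg_mem_right h hρ
  obtain ⟨X, hX⟩ := effective_mem hse hτm
  obtain ⟨τ', hτ'T, hτ'⟩ := exists_reverse_in_T hM (hmsg τ hτm) hX
  rwa [reverse_unique hR hτ']

/-- A reverse message of a concise message is concise for the target. -/
lemma revMsg_concise (hM : IsMedium T) {m mr : List (S → S)} {P : S}
    (hm : Concise T m P) (h : IsReverseOfMsg m mr) :
    Concise T mr (mApply m P) ∧ mApply mr (mApply m P) = P := by
  obtain ⟨hmsg, hcons, hse, hnd⟩ := hm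
  obtain ⟨hse', happ'⟩ := revMsg_stepwise h hse
  refine ⟨⟨revMsg_isMsg hM hmsg hse h, ?_, hse', ?_⟩, happ'⟩
  · -- consistency
    intro ρ₁ h₁ ρ₂ h₂ hRev
    obtain ⟨τ₁, hτ₁, hR₁, hR₁'⟩ := revMsg_mem_right h h₁
    obtain ⟨τ₂, hτ₂, hR₂, hR₂'⟩ := revMsg_mem_right h h₂
    have : τ₁ = ρ₂ := reverse_unique hR₁' hRev
    subst this
    exact hcons τ₂ hτ₂ τ₁ hτ₁ hR₂
  · -- nodup
    rw [← List.nodup_reverse]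
    rw [List.nodup_iff_injective_get] at hnd ⊢
    obtain ⟨hlen, hget⟩ := List.forall₂_iff_get.1 h
    intro i j hij
    have hi : (i : ℕ) < m.length := by omega
    have hj : (j : ℕ) < m.length := by omega
    have e1 := (hget i hi i.2).1
    have e2 := (hget j hj j.2).1
    rw [Fin.eta] at e1 e2
    rw [hij] at e1
    have : m.get ⟨i, hi⟩ = m.get ⟨j, hj⟩ := reverse_unique' e1 e2
    have := hnd this
    exact Fin.ext (by simpa using congrArg Fin.val this)

open Classical in
lemma count_eq_card (l : List (S → S)) (x : S → S) :
    l.count x = (Finset.univ.filter (fun i : Fin l.length => l.get i = x)).card := by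
  classical
  conv_lhs => rw [← List.map_get_finRange l]
  rw [List.count_eq_countP, List.countP_map]
  rw [List.countP_eq_length_filter]
  rw [← List.toFinset_card_of_nodup ((List.nodup_finRange _).filter _)]
  congr 1
  ext i
  simp [Function.comp, List.mem_toFinset, List.mem_filter, List.mem_finRange, beq_iff_eq]

open Classical in
/-- In a vacuous message, the count of a token is at most the count of its reverse. -/
lemma vacuous_count_le {u : List (S → S)} (hu : Vacuous u) {τ τ' : S → S}
    (hR : IsReverse τ τ') : u.count τ ≤ u.count τ' := by
  classical
  obtain ⟨σ, -, -, hσ⟩ := hu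
  rw [count_eq_card, count_eq_card]
  apply Finset.card_le_card_of_injOn σ
  · intro i hi
    simp only [Finset.mem_coe, Finset.mem_filter, Finset.mem_univ, true_and] at hi ⊢
    have := hσ i
    rw [hi] at this
    exact reverse_unique this hR
  · intro a _ b _ hab
    exact σ.injective hab

/-- M1: no token of a concise message from `P` lies in the content of `P`. -/
lemma token_not_in_source (hM : IsMedium T) {m : List (S → S)} {P Q : S}
    (hm : Concise T m P) (hPQ : mApply m P = Q) {τ : S → S} (hτ : τ ∈ m) :
    τ ∉ SContent T P := by
  classical
  rintro ⟨V, n, hn, hnP, hτn⟩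
  obtain ⟨w, hw, hwA⟩ : ∃ w, Concise T w Q ∧ mApply w Q = V := by
    by_cases hQV : Q = V
    · exact ⟨[], concise_nil Q, hQV⟩
    · exact hM.2.1 Q V hQV
  have humsg : IsMsg T (n ++ m ++ w) := by
    intro ρ hρ
    rcases List.mem_append.1 hρ with h | h
    · rcases List.mem_append.1 h with h | h
      · exact hn.1 ρ h
      · exact hm.1 ρ h
    · exact hw.1 ρ h
  have huret : IsReturn (n ++ m ++ w) V := by
    constructor
    · rw [stepwiseEff_append, stepwiseEff_append, hnP, mApply_append, hnP, hPQ]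
      exact ⟨⟨hn.2.2.1, hm.2.2.1⟩, hw.2.2.1⟩
    · rw [mApply_append, mApply_append, hnP, hPQ, hwA]
  have hvac := hM.2.2 _ _ humsg huret
  obtain ⟨X, hX⟩ := effective_mem hm.2.2.1 hτ
  obtain ⟨τ', hτ'T, hτ'⟩ := exists_reverse_in_T hM (hm.1 τ hτ) hX
  have h2 : 2 ≤ (n ++ m ++ w).count τ := by
    rw [List.count_append, List.count_append]
    have h1 : 0 < n.count τ := List.count_pos_iff.2 hτn
    have h2 : 0 < m.count τ := List.count_pos_iff.2 hτ
    omega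
  have h2' : 2 ≤ (n ++ m ++ w).count τ' := le_trans h2 (vacuous_count_le hvac hτ')
  have hτ'n : τ' ∉ n := fun h => hn.2.1 τ hτn τ' h hτ'
  have hτ'm : τ' ∉ m := fun h => hm.2.1 τ hτ τ' h hτ'
  have h1 : (n ++ m ++ w).count τ' ≤ 1 := by
    rw [List.count_append, List.count_append, List.count_eq_zero_of_not_mem hτ'n,
      List.count_eq_zero_of_not_mem hτ'm]
    simpa using (List.nodup_iff_count_le_one.1 hw.2.2.2) τ'
  omega

/-- M2: a token of any concise message producing `Q` that is not in the content of `P`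
belongs to `m`. -/
lemma token_mem_of_not_source (hM : IsMedium T) {m : List (S → S)} {P Q : S}
    (hm : Concise T m P) (hPQ : mApply m P = Q) {τ : S → S} {V : S} {n : List (S → S)}
    (hn : Concise T n V) (hnQ : mApply n V = Q) (hτn : τ ∈ n)
    (hτP : τ ∉ SContent T P) : τ ∈ m := by
  obtain ⟨m', hm', hm'T⟩ := exists_reverse_msg hM hm.1 hm.2.2.1
  obtain ⟨hm'c, hm'A⟩ := revMsg_concise hM hm hm'
  rw [hPQ] at hm'c hm'A
  obtain ⟨z, hz, hzA⟩ : ∃ z, Concise T z P ∧ mApply z P = V := by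
    by_cases hPV : P = V
    · exact ⟨[], concise_nil P, hPV⟩
    · exact hM.2.1 P V hPV
  obtain ⟨z', hz', hz'T⟩ := exists_reverse_msg hM hz.1 hz.2.2.1
  obtain ⟨hz'c, hz'A⟩ := revMsg_concise hM hz hz'
  rw [hzA] at hz'c hz'A
  have humsg : IsMsg T (n ++ m' ++ z) := by
    intro ρ hρ
    rcases List.mem_append.1 hρ with h | h
    · rcases List.mem_append.1 h with h | h
      · exact hn.1 ρ h
      · exact hm'c.1 ρ h
    · exact hz.1 ρ h
  have huret : IsReturn (n ++ m' ++ z) V := by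
    constructor
    · rw [stepwiseEff_append, stepwiseEff_append, hnQ, mApply_append, hnQ, hm'A]
      exact ⟨⟨hn.2.2.1, hm'c.2.2.1⟩, hz.2.2.1⟩
    · rw [mApply_append, mApply_append, hnQ, hm'A, hzA]
  have hvac := hM.2.2 _ _ humsg huret
  obtain ⟨ρ, hρu, hρR⟩ := vacuous_exists_reverse hvac
    (by exact List.mem_append.2 (Or.inl (List.mem_append.2 (Or.inl hτn))))
  rcases List.mem_append.1 hρu with h | hρz
  · rcases List.mem_append.1 h with hρn | hρm'
    · exact absurd hρR (hn.2.1 τ hτn ρ hρn)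
    · obtain ⟨τ₀, hτ₀, hR₀, -⟩ := revMsg_mem_right hm' hρm'
      have : τ = τ₀ := reverse_unique' hρR hR₀
      rwa [this]
  · obtain ⟨ρ', hρ', -, hR'⟩ := revMsg_mem_left hz' hρz
    have : τ = ρ' := reverse_unique' hρR hR'
    exact absurd ⟨V, z', hz'c, hz'A, this ▸ hρ'⟩ hτP

/-- The heart of part 1, as a reusable lemma. -/
lemma content_diff (hM : IsMedium T) {P Q : S} {m : List (S → S)}
    (hm : Concise T m P) (hPQ : mApply m P = Q) :
    SContent T Q \ SContent T P = msgContent m := by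
  ext τ
  constructor
  · rintro ⟨⟨V, n, hn, hnQ, hτn⟩, hτP⟩
    exact token_mem_of_not_source hM hm hPQ hn hnQ hτn hτP
  · intro hτ
    exact ⟨⟨P, m, hm, hPQ, hτ⟩, token_not_in_source hM hm hPQ hτ⟩

end Aux

/-- If a concise message `m` produces `Q` from `P`, then
`SContent Q \\ SContent P = C(m)` and the symmetric difference of the contents of
`Q` and `P` is the disjoint union of `C(m)` and `C(m̃)`. -/
theorem stmt4 {T : Set (S → S)} (hM : IsMedium T) (P Q : S)
    (m mr : List (S → S)) (hm : Concise T m P) (hPQ : mApply m P = Q) (hne : P ≠ Q)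
    (hmr : IsReverseOfMsg m mr) :
    SContent T Q \ SContent T P = msgContent m ∧
    symmDiff (SContent T Q) (SContent T P) = msgContent m ∪ msgContent mr ∧
    Disjoint (msgContent m) (msgContent mr) := by
  obtain ⟨hmrc, hmrA⟩ := revMsg_concise hM hm hmr
  rw [hPQ] at hmrc hmrA
  refine ⟨content_diff hM hm hPQ, ?_, ?_⟩
  · rw [Set.symmDiff_def, content_diff hM hm hPQ, content_diff hM hmrc hmrA]
  · rw [Set.disjoint_left]
    intro τ hτm hτmr
    obtain ⟨τ₀, hτ₀, hR₀, -⟩ := revMsg_mem_right hmr hτmr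
    exact hm.2.1 τ₀ hτ₀ τ hτm hR₀
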